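/- arXiv:1010.2031 — 3 statements merged into one kernel-verified Lean document; each statement's English description precedes it below -/
import Mathlib

section
/- The projection π : Σ* → contexts, (C,λ) ↦ C, where the poset of contexts carries the lower-set topology (opens = downward closed sets of contexts), is a perfect map: it is a closed map (the image under π of every closed subset of Σ* is closed, i.e. its complement is downward closed) and it has compact fibres (for every context C the fibre π⁻¹(C), homeomorphic to the compact space Σ_C, is compact). This is the external content of Corollary 2.7, which asserts that the internal locale Σ* is compact. -/
open WeakDual

variable (A : Type*) [CStarAlgebra A]

/-- A classical context: a commutative unital closed star-subalgebra of `A`. -/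
structure Context where
  carrier : Subalgebra ℂ A
  star_mem' : ∀ x ∈ carrier, star x ∈ carrier
  isClosed' : IsClosed (carrier : Set A)
  mul_comm' : ∀ x ∈ carrier, ∀ y ∈ carrier, x * y = y * x

variable {A}

/-- The Gelfand spectrum of a context: the character space of `C`. -/
abbrev Context.Spec (C : Context A) : Type _ := characterSpace ℂ C.carrier

/-- The inclusion of a smaller context into a larger one, as a continuous linear map. -/
def Context.inclCLM {D C : Context A} (h : D.carrier ≤ C.carrier) :
    D.carrier →L[ℂ] C.carrier where
  toLinearMap := (Subalgebra.inclusion h).toLinearMap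
  cont := continuous_induced_rng.mpr continuous_subtype_val

/-- Restriction of a character along an inclusion of contexts. -/
noncomputable def Context.restrictChar {D C : Context A} (h : D.carrier ≤ C.carrier)
    (lam : C.Spec) : D.Spec :=
  ⟨(lam : WeakDual ℂ C.carrier).comp (Context.inclCLM h), by
    constructor
    · intro h0
      have h1 : (lam : WeakDual ℂ C.carrier).comp (Context.inclCLM h) (1 : D.carrier) = 0 := by
        rw [h0]; rfl
      have h2 : (lam : WeakDual ℂ C.carrier).comp (Context.inclCLM h) (1 : D.carrier) = 1 := by
        show lam ((Context.inclCLM h) (1 : D.carrier)) = 1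
        have h3 : (Context.inclCLM h) (1 : D.carrier) = (1 : C.carrier) := rfl
        rw [h3]
        exact map_one lam
      rw [h1] at h2
      exact zero_ne_one h2
    · intro x y
      show lam ((Context.inclCLM h) (x * y)) = lam ((Context.inclCLM h) x) * lam ((Context.inclCLM h) y)
      have h4 : (Context.inclCLM h) (x * y) = (Context.inclCLM h) x * (Context.inclCLM h) y := rfl
      rw [h4]
      exact map_mul lam _ _⟩

/-- The disjoint union of all Gelfand spectra of contexts. -/
abbrev SigmaSpace (A : Type*) [CStarAlgebra A] : Type _ := (C : Context A) × C.Spec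

/-- The topology on the poset of contexts whose opens are the downward closed sets. -/
instance : TopologicalSpace (Context A) where
  IsOpen s := ∀ C ∈ s, ∀ D : Context A, D.carrier ≤ C.carrier → D ∈ s
  isOpen_univ := fun _ _ _ _ => trivial
  isOpen_inter := fun s t hs ht C hC D hD => ⟨hs C hC.1 D hD, ht C hC.2 D hD⟩
  isOpen_sUnion := fun S hS C hC D hD => by
    obtain ⟨s, hsS, hCs⟩ := hC
    exact ⟨s, hsS, hS s hsS C hCs D hD⟩

/-- The topology `𝒪 Σ*` of the contravariant approach: a set is open iff each of its fibres
is open and it is closed under restriction of characters to smaller contexts. -/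
instance : TopologicalSpace (SigmaSpace A) where
  IsOpen U := (∀ C : Context A, IsOpen {lam : C.Spec | Sigma.mk C lam ∈ U}) ∧
    ∀ (C D : Context A) (h : D.carrier ≤ C.carrier) (lam : C.Spec),
      Sigma.mk C lam ∈ U → Sigma.mk D (Context.restrictChar h lam) ∈ U
  isOpen_univ := ⟨fun _ => isOpen_univ, fun _ _ _ _ _ => trivial⟩
  isOpen_inter := fun U V hU hV => ⟨fun C => (hU.1 C).inter (hV.1 C),
    fun C D h lam hm => ⟨hU.2 C D h lam hm.1, hV.2 C D h lam hm.2⟩⟩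
  isOpen_sUnion := fun S hS => by
    constructor
    · intro C
      have h1 : {lam : C.Spec | Sigma.mk C lam ∈ ⋃₀ S} =
          ⋃ U ∈ S, {lam : C.Spec | Sigma.mk C lam ∈ U} := by
        ext lam; simp
      rw [h1]
      exact isOpen_biUnion fun U hU => (hS U hU).1 C
    · rintro C D h lam ⟨U, hUS, hmU⟩
      exact ⟨U, hUS, (hS U hUS).2 C D h lam hmU⟩

noncomputable instance Context.instStarRing (C : Context A) : StarRing ↥C.carrier where
  star x := ⟨star x.1, C.star_mem' x.1 x.2⟩
  star_involutive x := Subtype.ext (star_star x.1)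
  star_mul x y := Subtype.ext (star_mul x.1 y.1)
  star_add x y := Subtype.ext (star_add x.1 y.1)
noncomputable instance Context.instStarModule (C : Context A) : StarModule ℂ ↥C.carrier :=
  ⟨fun c x => Subtype.ext (star_smul c x.1)⟩
noncomputable instance Context.instCompleteSpace (C : Context A) : CompleteSpace ↥C.carrier :=
  C.isClosed'.completeSpace_coe
noncomputable instance Context.instNormedCommRing (C : Context A) : NormedCommRing ↥C.carrier :=
  { (inferInstance : NormedRing ↥C.carrier) with
    mul_comm := fun x y => Subtype.ext (C.mul_comm' x.1 x.2 y.1 y.2) }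
noncomputable instance Context.instCStarRing (C : Context A) : CStarRing ↥C.carrier where
  norm_mul_self_le x := CStarRing.norm_star_mul_self (x := (x : A)) |>.symm.le
noncomputable instance Context.instCommCStarAlgebra (C : Context A) :
    CommCStarAlgebra ↥C.carrier where

lemma Context.restrictChar_continuous {D C : Context A} (h : D.carrier ≤ C.carrier) :
    Continuous (Context.restrictChar (A := A) h) := by
  apply Continuous.subtype_mk
  apply WeakDual.continuous_of_continuous_eval
  intro x
  exact (WeakDual.eval_continuous ((Context.inclCLM h) x)).comp continuous_induced_dom

lemma Context.restrictChar_surjective {D C : Context A} (h : D.carrier ≤ C.carrier) :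
    Function.Surjective (Context.restrictChar (A := A) h) := by
  intro mu
  by_contra hmu
  push_neg at hmu
  have hrange : IsClosed (Set.range (Context.restrictChar (A := A) h)) :=
    (isCompact_range (Context.restrictChar_continuous h)).isClosed
  have hdisj : Disjoint (Set.range (Context.restrictChar (A := A) h)) ({mu} : Set D.Spec) := by
    rw [Set.disjoint_singleton_right]
    rintro ⟨lam, hl⟩
    exact hmu lam hl
  obtain ⟨f, hf0, hf1, -⟩ :=
    exists_continuous_zero_one_of_isClosed hrange isClosed_singleton hdisj
  set g : C(D.Spec, ℂ) :=
    (ContinuousMap.mk Complex.ofReal Complex.continuous_ofReal).comp f with hg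
  obtain ⟨a, ha⟩ := (gelfandTransform_bijective ↥D.carrier).2 g
  set b : ↥C.carrier := ⟨a.1, h a.2⟩ with hb
  have key : ∀ lam : C.Spec, lam b = 0 := by
    intro lam
    have h1 : Context.restrictChar h lam a = g (Context.restrictChar h lam) := by
      conv_rhs => rw [← ha]
      rfl
    have h2 : g (Context.restrictChar h lam) = 0 := by
      show (Complex.ofReal (f (Context.restrictChar h lam)) : ℂ) = 0
      rw [hf0 ⟨lam, rfl⟩]
      simp
    have h3 : Context.restrictChar h lam a = lam b := rfl
    rw [h3, h2] at h1
    exact h1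
  have hb0 : b = 0 := by
    apply (gelfandTransform_bijective ↥C.carrier).1
    ext lam
    simpa using key lam
  have ha0 : a = 0 := by
    apply Subtype.ext
    have : b.1 = (0 : ↥C.carrier).1 := congrArg Subtype.val hb0
    simpa [hb] using this
  have : g mu = 0 := by
    rw [← ha, ha0]
    simp
  rw [hg] at this
  simp only [ContinuousMap.comp_apply, ContinuousMap.coe_mk] at this
  rw [hf1 rfl] at this
  simp at this

/-- With the downset topology on the poset of contexts, the projection
`π : Σ* → contexts` is a perfect map: it is continuous, it is a closed map, and every fibre
`π⁻¹(C)` is compact. (Externally, this says that the internal locale `Σ*` is compact.) -/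
theorem statement2 :
    Continuous (fun p : SigmaSpace A => p.1) ∧
    IsClosedMap (fun p : SigmaSpace A => p.1) ∧
    ∀ C : Context A, IsCompact ((fun p : SigmaSpace A => p.1) ⁻¹' {C}) := by
  refine ⟨?_, ?_, ?_⟩
  · rw [continuous_def]
    intro s hs
    refine ⟨fun C => ?_, fun C D h lam hm => hs C hm D h⟩
    by_cases hC : C ∈ s
    · have : {lam : C.Spec | Sigma.mk C lam ∈ (fun p : SigmaSpace A => p.1) ⁻¹' s} =
          Set.univ := by
        ext lam; simpa using hC
      rw [this]; exact isOpen_univ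
    · have : {lam : C.Spec | Sigma.mk C lam ∈ (fun p : SigmaSpace A => p.1) ⁻¹' s} =
          (∅ : Set C.Spec) := by
        ext lam; simpa using hC
      rw [this]; exact isOpen_empty
  · intro K hK
    rw [← isOpen_compl_iff] at hK ⊢
    intro C hC D hle hD
    obtain ⟨⟨D', mu⟩, hmem, hfst⟩ := hD
    cases hfst
    obtain ⟨lam, hlam⟩ := Context.restrictChar_surjective hle mu
    have hCl : Sigma.mk C lam ∈ Kᶜ := by
      intro hin
      exact hC ⟨Sigma.mk C lam, hin, rfl⟩
    have := hK.2 C D' hle lam hCl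
    rw [hlam] at this
    exact this hmem
  · intro C
    have heq : (fun p : SigmaSpace A => p.1) ⁻¹' {C} = Set.range (Sigma.mk C) := by
      ext ⟨C', lam⟩
      constructor
      · rintro (rfl : C' = C)
        exact ⟨lam, rfl⟩
      · rintro ⟨mu, hm⟩
        cases hm
        rfl
    rw [heq]
    have hcont : Continuous (Sigma.mk C : C.Spec → SigmaSpace A) := by
      rw [continuous_def]
      intro U hU
      exact hU.1 C
    exact isCompact_range hcont
end

section
/- Let a and b be positive elements of C such that X_a = X_b, i.e. {λ ∈ Σ_C : λ(a) > 0} = {λ ∈ Σ_C : λ(b) > 0}. Then for every positive rational q there exists n ∈ ℕ with (a − q·1)⁺ ≤ n·b. -/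
open WeakDual
open scoped ComplexOrder

section Aux

variable {C : Type*} [CommCStarAlgebra C] [PartialOrder C] [StarOrderedRing C]

lemma aux_char_nonneg {x : C} (hx : 0 ≤ x) (lam : characterSpace ℂ C) : 0 ≤ lam x :=
  spectrum_nonneg_of_nonneg hx (AlgHom.apply_mem_spectrum lam x)

lemma aux_nonneg_of_char {x : C} (hx : IsSelfAdjoint x)
    (h : ∀ lam : characterSpace ℂ C, 0 ≤ lam x) : 0 ≤ x := by
  rw [StarOrderedRing.nonneg_iff_spectrum_nonneg (R := ℝ) x hx]
  intro r hr
  have hr' : (r : ℂ) ∈ spectrum ℂ x :=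
    (IsSelfAdjoint.coe_mem_spectrum_complex hx).mpr hr
  obtain ⟨lam, hlam⟩ := WeakDual.CharacterSpace.mem_spectrum_iff_exists.mp hr'
  have := h lam
  rw [hlam] at this
  exact Complex.zero_le_real.mp this

lemma aux_char_real {x : C} (hx : 0 ≤ x) (lam : characterSpace ℂ C) :
    lam x = ((lam x).re : ℂ) := by
  have h := aux_char_nonneg hx lam
  rw [Complex.nonneg_iff] at h
  exact Complex.ext rfl (by simpa using h.2.symm)

/-- Characters map the positive part of `a - q•1` to the (real) positive part of `λ a - q`. -/
lemma aux_char_posPart {a : C} (ha : 0 ≤ a) (q : ℝ) (lam : characterSpace ℂ C) :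
    lam ((a - (q : ℂ) • 1)⁺) = ((((lam a).re - q)⁺ : ℝ) : ℂ) := by
  set x := a - (q : ℂ) • 1 with hxdef
  have hq1 : IsSelfAdjoint ((q : ℂ) • (1 : C)) := by
    rw [IsSelfAdjoint, star_smul, star_one]
    norm_num
  have hx : IsSelfAdjoint x := ha.isSelfAdjoint.sub hq1
  have hxc : x⁺ = cfc (fun r : ℝ => r⁺) x := by
    rw [CFC.posPart_def, cfcₙ_eq_cfc]
  have hlamx : IsSelfAdjoint (lam x) := hx.map lam
  have hmap : lam (x⁺) = cfc (fun r : ℝ => r⁺) (lam x) := by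
    rw [hxc]
    exact StarAlgHomClass.map_cfc (S := ℂ) lam (fun r : ℝ => r⁺) x
      (hφ := map_continuous lam) (ha := hx) (hφa := hlamx)
  have hxval : lam x = (((lam a).re - q : ℝ) : ℂ) := by
    rw [hxdef]
    push_cast
    rw [map_sub, map_smul, map_one, aux_char_real ha lam]
    simp
  rw [hmap, hxval]
  have : cfc (fun r : ℝ => r⁺) ((((lam a).re - q : ℝ) : ℂ)) =
      ((((lam a).re - q : ℝ) : ℂ))⁺ := by
    rw [CFC.posPart_def, cfcₙ_eq_cfc]
  rw [this]
  have halg : ((((lam a).re - q : ℝ) : ℂ)) = algebraMap ℝ ℂ ((lam a).re - q) := rfl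
  rw [halg, CFC.posPart_algebraMap]
  rfl

end Aux

/-- Let `C` be a commutative unital C*-algebra (equipped with its canonical
order) and let `a, b` be positive elements of `C` with `X_a = X_b`, i.e. a character of `C`
is strictly positive on `a` iff it is strictly positive on `b`. Then for every positive
rational `q` there exists `n ∈ ℕ` with `(a - q·1)⁺ ≤ n • b`. -/
theorem statement8 {C : Type*} [CommCStarAlgebra C] [PartialOrder C] [StarOrderedRing C]
    (a b : C) (ha : 0 ≤ a) (hb : 0 ≤ b)
    (hX : {lam : characterSpace ℂ C | 0 < lam a} = {lam : characterSpace ℂ C | 0 < lam b}) :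
    ∀ q : ℚ, 0 < q → ∃ n : ℕ, (a - (q : ℂ) • 1)⁺ ≤ n • b := by
  intro q hq
  -- real-valued continuous functions on the character space
  set F : characterSpace ℂ C → ℝ := fun lam => (lam a).re with hF
  set G : characterSpace ℂ C → ℝ := fun lam => (lam b).re with hG
  have hFc : Continuous F := by
    exact Complex.continuous_re.comp ((WeakDual.eval_continuous a).comp continuous_subtype_val)
  have hGc : Continuous G := by
    exact Complex.continuous_re.comp ((WeakDual.eval_continuous b).comp continuous_subtype_val)
  have hF0 : ∀ lam, 0 ≤ F lam := fun lam =>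
    (Complex.nonneg_iff.mp (aux_char_nonneg ha lam)).1
  have hG0 : ∀ lam, 0 ≤ G lam := fun lam =>
    (Complex.nonneg_iff.mp (aux_char_nonneg hb lam)).1
  -- it suffices to verify the inequality pointwise at each character
  have key : ∀ n : ℕ, (∀ lam : characterSpace ℂ C, (F lam - q)⁺ ≤ n * G lam) →
      (a - (q : ℂ) • 1)⁺ ≤ n • b := by
    intro n hn
    rw [← sub_nonneg]
    have hc : (0 : C) ≤ (a - (q : ℂ) • 1)⁺ := CFC.posPart_nonneg _
    refine aux_nonneg_of_char (((nsmul_nonneg hb n).isSelfAdjoint).sub hc.isSelfAdjoint)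
      fun lam => ?_
    rw [map_sub, show ((q : ℚ) : ℂ) = (((q : ℝ)) : ℂ) from by norm_cast,
      aux_char_posPart ha (q : ℝ) lam]
    have : lam (n • b) = ((n * G lam : ℝ) : ℂ) := by
      rw [map_nsmul, aux_char_real hb lam]
      push_cast
      ring
    rw [this, ← Complex.ofReal_sub, Complex.zero_le_real, sub_nonneg]
    exact hn lam
  -- the compact set where F ≥ q
  set K : Set (characterSpace ℂ C) := F ⁻¹' Set.Ici (q : ℝ) with hK
  have hKc : IsCompact K := (isClosed_Ici.preimage hFc).isCompact
  rcases K.eq_empty_or_nonempty with hKe | hKne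
  · -- F < q everywhere, take n = 0
    refine ⟨0, key 0 fun lam => ?_⟩
    have : F lam < q := by
      by_contra h
      exact absurd (Set.eq_empty_iff_forall_notMem.mp hKe lam) fun h' => h' (le_of_not_gt h)
    simp only [Nat.cast_zero, zero_mul]
    exact posPart_nonpos.mpr (by linarith)
  · -- G attains a positive minimum δ on K
    obtain ⟨lam0, hlam0K, hmin⟩ := hKc.exists_isMinOn hKne hGc.continuousOn
    have hlam0a : 0 < lam0 a := by
      rw [Complex.lt_def]
      constructor
      · have : (q : ℝ) ≤ F lam0 := hlam0K
        have hq' : (0 : ℝ) < q := by exact_mod_cast hq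
        simpa using lt_of_lt_of_le hq' this
      · have := (Complex.nonneg_iff.mp (aux_char_nonneg ha lam0)).2
        simp [← this]
    have hlam0b : 0 < lam0 b := by
      have : lam0 ∈ {lam : characterSpace ℂ C | 0 < lam a} := hlam0a
      rw [hX] at this
      exact this
    have hδ : 0 < G lam0 := by
      have := (Complex.lt_def.mp hlam0b).1
      simpa using this
    obtain ⟨n, hn⟩ := exists_nat_ge (‖a‖ / G lam0)
    refine ⟨n, key n fun lam => ?_⟩
    by_cases hmem : (q : ℝ) ≤ F lam
    · -- on K : (F - q)⁺ = F - q ≤ ‖a‖ ≤ n·δ ≤ n·G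
      have h1 : (F lam - q)⁺ = F lam - q := posPart_eq_self.mpr (by linarith)
      have h2 : F lam ≤ ‖a‖ := by
        have hmemsp : lam a ∈ spectrum ℂ a :=
          WeakDual.CharacterSpace.mem_spectrum_iff_exists.mpr ⟨lam, rfl⟩
        have hnt : (1 : C) ≠ 0 := by
          intro h
          have h1 : lam 1 = 1 := map_one lam
          rw [h, map_zero] at h1
          exact one_ne_zero h1.symm
        haveI : Nontrivial C := ⟨⟨1, 0, hnt⟩⟩
        have := spectrum.norm_le_norm_of_mem hmemsp
        calc F lam ≤ |(lam a).re| := le_abs_self _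
          _ ≤ ‖lam a‖ := Complex.abs_re_le_norm _
          _ ≤ ‖a‖ := this
      have h3 : ‖a‖ ≤ n * G lam0 := by
        rw [div_le_iff₀ hδ] at hn
        exact hn
      have h4 : G lam0 ≤ G lam := hmin hmem
      have h5 : (n : ℝ) * G lam0 ≤ n * G lam :=
        mul_le_mul_of_nonneg_left h4 (Nat.cast_nonneg n)
      have hq' : (0 : ℝ) < q := by exact_mod_cast hq
      rw [h1]
      linarith
    · have h1 : (F lam - q)⁺ = 0 := posPart_eq_zero.mpr (by linarith [lt_of_not_ge hmem])
      rw [h1]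
      exact mul_nonneg (Nat.cast_nonneg n) (hG0 lam)
end

section
/- Let F be an irreducible closed subset of Σ* (nonempty and not the union of two closed proper subsets). Suppose there is a context C such that F_C ≠ ∅ while F_D = ∅ for every context D properly contained in C. Then there is a unique λ ∈ Σ_C such that F is the closure of the point (C,λ) in Σ*. -/
open WeakDual

variable (A : Type*) [CStarAlgebra A]

variable {A}

/-! ### Auxiliary lemmas for the proof of Statement 13 -/

lemma restrictChar_refl' {C : Context A} (lam : C.Spec) :
    Context.restrictChar le_rfl lam = lam := rfl

lemma continuous_restrictChar' {D C : Context A} (h : D.carrier ≤ C.carrier) :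
    Continuous (Context.restrictChar h : C.Spec → D.Spec) := by
  apply Continuous.subtype_mk
  exact WeakDual.continuous_of_continuous_eval fun x =>
    (WeakDual.eval_continuous (Context.inclCLM h x)).comp continuous_subtype_val

/-- Saturation property of closed sets in `Σ*`. -/
lemma mem_of_restrictChar_mem {K : Set (SigmaSpace A)} (hK : IsClosed K)
    {C D : Context A} (h : D.carrier ≤ C.carrier) (lam : C.Spec)
    (hm : (⟨D, Context.restrictChar h lam⟩ : SigmaSpace A) ∈ K) :
    (⟨C, lam⟩ : SigmaSpace A) ∈ K := by
  by_contra hn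
  exact hK.isOpen_compl.2 C D h lam hn hm

/-- For a closed `T ⊆ Σ_C`, the saturation `{(E,μ) : C ≤ E, μ|_C ∈ T}` is closed in `Σ*`. -/
lemma isClosed_satur {C : Context A} {T : Set C.Spec} (hT : IsClosed T) :
    IsClosed {q : SigmaSpace A | ∃ h : C.carrier ≤ q.1.carrier,
      Context.restrictChar h q.2 ∈ T} := by
  rw [← isOpen_compl_iff]
  refine ⟨fun E => ?_, fun E D h lam hm hex => ?_⟩
  · by_cases hCE : C.carrier ≤ E.carrier
    · have heq : {lam : E.Spec | Sigma.mk E lam ∈ {q : SigmaSpace A |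
          ∃ h : C.carrier ≤ q.1.carrier, Context.restrictChar h q.2 ∈ T}ᶜ}
          = Context.restrictChar hCE ⁻¹' Tᶜ := by
        ext lam
        constructor
        · intro hl ht
          exact hl ⟨hCE, ht⟩
        · rintro hl ⟨hh, ht⟩
          exact hl ht
      rw [heq]
      exact hT.isOpen_compl.preimage (continuous_restrictChar' hCE)
    · have heq : {lam : E.Spec | Sigma.mk E lam ∈ {q : SigmaSpace A |
          ∃ h : C.carrier ≤ q.1.carrier, Context.restrictChar h q.2 ∈ T}ᶜ}
          = Set.univ := by
        ext lam
        simp only [Set.mem_univ, iff_true]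
        rintro ⟨hh, -⟩
        exact hCE hh
      rw [heq]
      exact isOpen_univ
  · obtain ⟨hh, ht⟩ := hex
    exact hm ⟨hh.trans h, ht⟩

/-- The closure of a point `(C, λ)` in `Σ*` is its upward saturation. -/
lemma closure_singleton_eq {C : Context A} (lam : C.Spec) :
    closure {(⟨C, lam⟩ : SigmaSpace A)} = {q : SigmaSpace A |
      ∃ h : C.carrier ≤ q.1.carrier, Context.restrictChar h q.2 = lam} := by
  apply Set.Subset.antisymm
  · apply closure_minimal
    · exact Set.singleton_subset_iff.mpr ⟨le_rfl, rfl⟩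
    · have : IsClosed {q : SigmaSpace A |
          ∃ h : C.carrier ≤ q.1.carrier, Context.restrictChar h q.2 ∈ ({lam} : Set C.Spec)} :=
        isClosed_satur isClosed_singleton
      convert this using 2
      rfl
  · rintro ⟨E, mu⟩ ⟨h, heq⟩
    apply mem_of_restrictChar_mem isClosed_closure h mu
    rw [heq]
    exact subset_closure rfl

/-- Let `F` be an irreducible closed subset of `Σ*`. If there is a context
`C` whose fibre `F_C` is nonempty while the fibre `F_D` is empty for every context `D`
properly contained in `C`, then there is a unique `λ ∈ Σ_C` such that `F` is the closure of
the point `(C, λ)`. -/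
theorem statement13 (F : Set (SigmaSpace A)) (hFcl : IsClosed F) (hFirr : IsIrreducible F)
    (C : Context A) (hC : {lam : C.Spec | (⟨C, lam⟩ : SigmaSpace A) ∈ F}.Nonempty)
    (hmin : ∀ D : Context A, D.carrier < C.carrier →
      {lam : D.Spec | (⟨D, lam⟩ : SigmaSpace A) ∈ F} = ∅) :
    ∃! lam : C.Spec, F = closure {(⟨C, lam⟩ : SigmaSpace A)} := by
  
  obtain ⟨lam0, hlam0⟩ := hC
  have hlam0F : (⟨C, lam0⟩ : SigmaSpace A) ∈ F := hlam0
  -- Step 1: every point of F lies above C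
  have hup : ∀ q ∈ F, C.carrier ≤ q.1.carrier := by
    by_contra hcon
    push_neg at hcon
    obtain ⟨p, hpF, hple⟩ := hcon
    have hUopen : IsOpen {q : SigmaSpace A | ¬ C.carrier ≤ q.1.carrier} := by
      refine ⟨fun E => ?_, fun E D h lam hm => ?_⟩
      · by_cases hCE : C.carrier ≤ E.carrier
        · have : {lam : E.Spec | Sigma.mk E lam ∈
              {q : SigmaSpace A | ¬ C.carrier ≤ q.1.carrier}} = ∅ := by
            ext lam; simp [hCE]
          rw [this]; exact isOpen_empty
        · have : {lam : E.Spec | Sigma.mk E lam ∈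
              {q : SigmaSpace A | ¬ C.carrier ≤ q.1.carrier}} = Set.univ := by
            ext lam; simp [hCE]
          rw [this]; exact isOpen_univ
      · exact fun hCD => hm (hCD.trans h)
    have hVopen : IsOpen {q : SigmaSpace A | q.1.carrier ≤ C.carrier} := by
      refine ⟨fun E => ?_, fun E D h lam hm => h.trans hm⟩
      by_cases hEC : E.carrier ≤ C.carrier
      · have : {lam : E.Spec | Sigma.mk E lam ∈
            {q : SigmaSpace A | q.1.carrier ≤ C.carrier}} = Set.univ := by
          ext lam; simp [hEC]
        rw [this]; exact isOpen_univ
      · have : {lam : E.Spec | Sigma.mk E lam ∈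
            {q : SigmaSpace A | q.1.carrier ≤ C.carrier}} = ∅ := by
          ext lam; simp [hEC]
        rw [this]; exact isOpen_empty
    obtain ⟨q, hqF, hqU, hqV⟩ := hFirr.2 _ _ hUopen hVopen ⟨p, hpF, hple⟩
      ⟨⟨C, lam0⟩, hlam0F, (le_rfl : C.carrier ≤ C.carrier)⟩
    have hlt : q.1.carrier < C.carrier := lt_of_le_not_ge hqV hqU
    have := hmin q.1 hlt
    rw [Set.eq_empty_iff_forall_notMem] at this
    exact this q.2 hqF
  -- Step 2: all restrictions of points of F to C coincide with lam0
  have hconst : ∀ q ∈ F, ∀ h : C.carrier ≤ q.1.carrier,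
      Context.restrictChar h q.2 = lam0 := by
    by_contra hcon
    push_neg at hcon
    obtain ⟨p, hpF, h, hne⟩ := hcon
    obtain ⟨U1, U2, hU1, hU2, hm1, hm2, hdisj⟩ := t2_separation hne
    have hsub : F ⊆ {q : SigmaSpace A | ∃ hh : C.carrier ≤ q.1.carrier,
        Context.restrictChar hh q.2 ∈ U2ᶜ} ∪ {q : SigmaSpace A |
        ∃ hh : C.carrier ≤ q.1.carrier, Context.restrictChar hh q.2 ∈ U1ᶜ} := by
      intro q hq
      have hh := hup q hq
      by_cases hc : Context.restrictChar hh q.2 ∈ U2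
      · right
        exact ⟨hh, fun hmem => Set.disjoint_left.mp hdisj hmem hc⟩
      · left
        exact ⟨hh, hc⟩
    rcases (isPreirreducible_iff_isClosed_union_isClosed.mp hFirr.2) _ _
        (isClosed_satur hU2.isClosed_compl) (isClosed_satur hU1.isClosed_compl) hsub with
      hcase | hcase
    · obtain ⟨hh, hmem⟩ := hcase hlam0F
      exact hmem hm2
    · obtain ⟨hh, hmem⟩ := hcase hpF
      exact hmem hm1
  -- Step 3: F is the saturation of (C, lam0)
  have hFeq : F = {q : SigmaSpace A | ∃ h : C.carrier ≤ q.1.carrier,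
      Context.restrictChar h q.2 = lam0} := by
    apply Set.Subset.antisymm
    · intro q hq
      exact ⟨hup q hq, hconst q hq (hup q hq)⟩
    · rintro ⟨E, mu⟩ ⟨h, heq⟩
      apply mem_of_restrictChar_mem hFcl h mu
      rw [heq]
      exact hlam0F
  refine ⟨lam0, ?_, ?_⟩
  · show F = closure {(⟨C, lam0⟩ : SigmaSpace A)}
    rw [closure_singleton_eq]
    exact hFeq
  · intro lam' hlam'
    have hmem : (⟨C, lam'⟩ : SigmaSpace A) ∈ F := by
      rw [hlam']
      exact subset_closure rfl
    have := hconst _ hmem le_rfl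
    rwa [restrictChar_refl'] at this
end
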